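/- Let B be a commutative monoid satisfying the splitting condition. Then the hyperaddition on s(B) is associative: for all a, b, c in s(B), (a + b) + c = a + (b + c), where the sum of a subset and an element is the union of the pairwise hypersums. -/

import Mathlib

/-- The splitting condition on a commutative monoid. -/
def SplitCond (M : Type*) [AddCommMonoid M] : Prop :=
  ∀ x y u v : M, x + y = u + v →
    ∃ z : M, (x + z = u ∧ z + v = y) ∨ (x = u + z ∧ v = z + y)

/-- The basic identification `(a, 1) ∼ (b, -1)` when `a + b = 0` (true = +1, false = -1). -/
def symRel (M : Type*) [AddCommMonoid M] : M × Bool → M × Bool → Prop :=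
  fun p q => p.2 ≠ q.2 ∧ p.1 + q.1 = 0

/-- The symmetrization `s(M)` as the quotient of `M × {±1}` by the generated equivalence. -/
def SymHG (M : Type*) [AddCommMonoid M] := Quot (symRel M)

/-- The hyperlaw on representatives. -/
def hsum {M : Type*} [AddCommMonoid M] : M × Bool → M × Bool → Set (M × Bool)
  | (a, true), (b, true) => {(a + b, true)}
  | (a, false), (b, false) => {(a + b, false)}
  | (a, true), (b, false) =>
      {r | (∃ z, r = (z, true) ∧ z + b = a) ∨ (∃ z, r = (z, false) ∧ z + a = b)}
  | (a, false), (b, true) =>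
      {r | (∃ z, r = (z, true) ∧ z + a = b) ∨ (∃ z, r = (z, false) ∧ z + b = a)}

/-- The induced hypersum on the quotient `s(M)` (union over representatives). -/
def hadd {M : Type*} [AddCommMonoid M] (x y : SymHG M) : Set (SymHG M) :=
  {c | ∃ p q r, Quot.mk (symRel M) p = x ∧ Quot.mk (symRel M) q = y ∧
      Quot.mk (symRel M) r = c ∧ r ∈ hsum p q}

/-- The neutral element of `s(M)`. -/
def szero (M : Type*) [AddCommMonoid M] : SymHG M := Quot.mk (symRel M) (0, true)

section Aux

variable {M : Type*} [AddCommMonoid M]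

lemma symRel_symm {p q : M × Bool} (h : symRel M p q) : symRel M q p :=
  ⟨h.1.symm, by rw [add_comm]; exact h.2⟩

lemma quot_eq_iff (p q : M × Bool) :
    Quot.mk (symRel M) p = Quot.mk (symRel M) q ↔ p = q ∨ symRel M p q := by
  constructor
  · intro hq
    have hg := Quot.eqvGen_exact hq
    clear hq
    induction hg with
    | rel x y hxy => exact Or.inr hxy
    | refl x => exact Or.inl rfl
    | symm x y _ ih =>
        rcases ih with rfl | hr
        · exact Or.inl rfl
        · exact Or.inr (symRel_symm hr)
    | trans x y z _ _ ih1 ih2 =>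
        rcases ih1 with rfl | hr1
        · exact ih2
        · rcases ih2 with rfl | hr2
          · exact Or.inr hr1
          · left
            obtain ⟨hne1, he1⟩ := hr1
            obtain ⟨hne2, he2⟩ := hr2
            have hb : x.2 = z.2 := by
              cases hx : x.2 <;> cases hy : y.2 <;> cases hz : z.2 <;>
                simp_all
            have ha : x.1 = z.1 := by
              calc x.1 = x.1 + (y.1 + z.1) := by rw [he2, add_zero]
              _ = (x.1 + y.1) + z.1 := by rw [add_assoc]
              _ = z.1 := by rw [he1, zero_add]
            exact Prod.ext ha hb
  · rintro (rfl | hr)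
    · rfl
    · exact Quot.sound hr

lemma mem_hsum_tt {a b x : M} {s : Bool} :
    (x, s) ∈ hsum (a, true) (b, true) ↔ s = true ∧ x = a + b := by
  simp [hsum, Prod.ext_iff, and_comm]
lemma mem_hsum_ff {a b x : M} {s : Bool} :
    (x, s) ∈ hsum (a, false) (b, false) ↔ s = false ∧ x = a + b := by
  simp [hsum, Prod.ext_iff, and_comm]
lemma mem_hsum_tf {a b x : M} {s : Bool} :
    (x, s) ∈ hsum (a, true) (b, false) ↔
      (s = true ∧ x + b = a) ∨ (s = false ∧ x + a = b) := by
  simp [hsum, Prod.ext_iff]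
lemma mem_hsum_ft {a b x : M} {s : Bool} :
    (x, s) ∈ hsum (a, false) (b, true) ↔
      (s = true ∧ x + a = b) ∨ (s = false ∧ x + b = a) := by
  simp [hsum, Prod.ext_iff]
lemma key (h : SplitCond M) {a b c x : M} :
    x + c = a + b ↔ (∃ z, z + c = b ∧ x = a + z) ∨ (∃ z, z + b = c ∧ x + z = a) := by
  constructor
  · intro hx
    obtain ⟨z, ⟨h1, h2⟩ | ⟨h1, h2⟩⟩ := h x c a b hx
    · exact Or.inr ⟨z, h2, h1⟩
    · exact Or.inl ⟨z, h2.symm, h1⟩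
  · rintro (⟨z, hz, rfl⟩ | ⟨z, hz, hx⟩)
    · rw [add_assoc, hz]
    · rw [← hx, ← hz]; abel
lemma A_ttf (h : SplitCond M) (a b c : M) :
    (⋃ w ∈ hsum (a,true) (b,true), hsum w (c,false))
      = ⋃ w ∈ hsum (b,true) (c,false), hsum (a,true) w := by
  ext ⟨x, s⟩
  simp only [Set.mem_iUnion, exists_prop, Prod.exists, Bool.exists_bool,
    mem_hsum_tt, mem_hsum_ff, mem_hsum_tf, mem_hsum_ft]
  cases s <;> simp [add_assoc]
  rw [key h, or_comm, ← exists_or]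
lemma A_ttt (h : SplitCond M) (a b c : M) :
    (⋃ w ∈ hsum (a,true) (b,true), hsum w (c,true))
      = ⋃ w ∈ hsum (b,true) (c,true), hsum (a,true) w := by
  ext ⟨x, s⟩
  simp only [Set.mem_iUnion, exists_prop, Prod.exists, Bool.exists_bool,
    mem_hsum_tt, mem_hsum_ff, mem_hsum_tf, mem_hsum_ft]
  cases s <;> simp [add_assoc]
lemma A_tft (h : SplitCond M) (a b c : M) :
    (⋃ w ∈ hsum (a,true) (b,false), hsum w (c,true))
      = ⋃ w ∈ hsum (b,false) (c,true), hsum (a,true) w := by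
  ext ⟨x, s⟩
  simp only [Set.mem_iUnion, exists_prop, Prod.exists, Bool.exists_bool,
    mem_hsum_tt, mem_hsum_ff, mem_hsum_tf, mem_hsum_ft]
  cases s <;> simp [add_assoc]
  · rw [add_comm c a]
  · constructor
    · rintro ⟨z, ⟨h1, h2⟩ | ⟨h1, h2⟩⟩
      · have hx : x + b = a + c := by rw [← h1, ← h2]; abel
        rcases (key h (a := a) (b := c) (c := b) (x := x)).mp hx with
          ⟨w, hw1, hw2⟩ | ⟨w, hw1, hw2⟩
        · exact ⟨w, Or.inr ⟨hw1, hw2⟩⟩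
        · exact ⟨w, Or.inl ⟨hw1, hw2⟩⟩
      · have hx : x + b = a + c := by rw [h2, ← h1]; abel
        rcases (key h (a := a) (b := c) (c := b) (x := x)).mp hx with
          ⟨w, hw1, hw2⟩ | ⟨w, hw1, hw2⟩
        · exact ⟨w, Or.inr ⟨hw1, hw2⟩⟩
        · exact ⟨w, Or.inl ⟨hw1, hw2⟩⟩
    · rintro ⟨z, ⟨h1, h2⟩ | ⟨h1, h2⟩⟩
      · have hx : x + b = c + a := by rw [← h1, ← h2]; abel
        rcases (key h (a := c) (b := a) (c := b) (x := x)).mp hx with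
          ⟨w, hw1, hw2⟩ | ⟨w, hw1, hw2⟩
        · exact ⟨w, Or.inr ⟨hw1, hw2.trans (add_comm c w)⟩⟩
        · exact ⟨w, Or.inl ⟨hw1, hw2⟩⟩
      · have hx : x + b = c + a := by rw [h2, ← h1]; abel
        rcases (key h (a := c) (b := a) (c := b) (x := x)).mp hx with
          ⟨w, hw1, hw2⟩ | ⟨w, hw1, hw2⟩
        · exact ⟨w, Or.inr ⟨hw1, hw2.trans (add_comm c w)⟩⟩
        · exact ⟨w, Or.inl ⟨hw1, hw2⟩⟩
lemma A_tff (h : SplitCond M) (a b c : M) :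
    (⋃ w ∈ hsum (a,true) (b,false), hsum w (c,false))
      = ⋃ w ∈ hsum (b,false) (c,false), hsum (a,true) w := by
  ext ⟨x, s⟩
  simp only [Set.mem_iUnion, exists_prop, Prod.exists, Bool.exists_bool,
    mem_hsum_tt, mem_hsum_ff, mem_hsum_tf, mem_hsum_ft]
  cases s <;> simp [add_assoc]
  · constructor
    · rintro ⟨z, ⟨h1, h2⟩ | ⟨h1, h2⟩⟩
      · rw [h2, ← h1]; abel
      · rw [← h1, ← h2]; abel
    · intro hx
      have hx' : x + a = c + b := by rw [hx, add_comm b c]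
      rcases (key h (a := c) (b := b) (c := a) (x := x)).mp hx' with
        ⟨w, hw1, hw2⟩ | ⟨w, hw1, hw2⟩
      · exact ⟨w, Or.inl ⟨hw1, hw2.trans (add_comm c w)⟩⟩
      · exact ⟨w, Or.inr ⟨hw1, hw2⟩⟩
  · rw [add_comm c b]
lemma A_ftt (h : SplitCond M) (a b c : M) :
    (⋃ w ∈ hsum (a,false) (b,true), hsum w (c,true))
      = ⋃ w ∈ hsum (b,true) (c,true), hsum (a,false) w := by
  ext ⟨x, s⟩
  simp only [Set.mem_iUnion, exists_prop, Prod.exists, Bool.exists_bool,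
    mem_hsum_tt, mem_hsum_ff, mem_hsum_tf, mem_hsum_ft]
  cases s <;> simp [add_assoc]
  · rw [add_comm c b]
  · constructor
    · rintro ⟨z, ⟨h1, h2⟩ | ⟨h1, h2⟩⟩
      · rw [← h1, ← h2]; abel
      · rw [h2, ← h1]; abel
    · intro hx
      have hx' : x + a = c + b := by rw [hx, add_comm b c]
      rcases (key h (a := c) (b := b) (c := a) (x := x)).mp hx' with
        ⟨w, hw1, hw2⟩ | ⟨w, hw1, hw2⟩
      · exact ⟨w, Or.inr ⟨hw1, hw2.trans (add_comm c w)⟩⟩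
      · exact ⟨w, Or.inl ⟨hw1, hw2⟩⟩
lemma A_ftf (h : SplitCond M) (a b c : M) :
    (⋃ w ∈ hsum (a,false) (b,true), hsum w (c,false))
      = ⋃ w ∈ hsum (b,true) (c,false), hsum (a,false) w := by
  ext ⟨x, s⟩
  simp only [Set.mem_iUnion, exists_prop, Prod.exists, Bool.exists_bool,
    mem_hsum_tt, mem_hsum_ff, mem_hsum_tf, mem_hsum_ft]
  cases s <;> simp [add_assoc]
  · constructor
    · rintro ⟨z, ⟨h1, h2⟩ | ⟨h1, h2⟩⟩
      · have hx : x + b = a + c := by rw [h2, ← h1]; abel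
        rcases (key h (a := a) (b := c) (c := b) (x := x)).mp hx with
          ⟨w, hw1, hw2⟩ | ⟨w, hw1, hw2⟩
        · exact ⟨w, Or.inl ⟨hw1, hw2⟩⟩
        · exact ⟨w, Or.inr ⟨hw1, hw2⟩⟩
      · have hx : x + b = a + c := by rw [← h1, ← h2]; abel
        rcases (key h (a := a) (b := c) (c := b) (x := x)).mp hx with
          ⟨w, hw1, hw2⟩ | ⟨w, hw1, hw2⟩
        · exact ⟨w, Or.inl ⟨hw1, hw2⟩⟩
        · exact ⟨w, Or.inr ⟨hw1, hw2⟩⟩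
    · rintro ⟨z, ⟨h1, h2⟩ | ⟨h1, h2⟩⟩
      · have hx : x + b = c + a := by rw [h2, ← h1]; abel
        rcases (key h (a := c) (b := a) (c := b) (x := x)).mp hx with
          ⟨w, hw1, hw2⟩ | ⟨w, hw1, hw2⟩
        · exact ⟨w, Or.inl ⟨hw1, hw2.trans (add_comm c w)⟩⟩
        · exact ⟨w, Or.inr ⟨hw1, hw2⟩⟩
      · have hx : x + b = c + a := by rw [← h1, ← h2]; abel
        rcases (key h (a := c) (b := a) (c := b) (x := x)).mp hx with
          ⟨w, hw1, hw2⟩ | ⟨w, hw1, hw2⟩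
        · exact ⟨w, Or.inl ⟨hw1, hw2.trans (add_comm c w)⟩⟩
        · exact ⟨w, Or.inr ⟨hw1, hw2⟩⟩
  · rw [add_comm c a]
lemma A_fft (h : SplitCond M) (a b c : M) :
    (⋃ w ∈ hsum (a,false) (b,false), hsum w (c,true))
      = ⋃ w ∈ hsum (b,false) (c,true), hsum (a,false) w := by
  ext ⟨x, s⟩
  simp only [Set.mem_iUnion, exists_prop, Prod.exists, Bool.exists_bool,
    mem_hsum_tt, mem_hsum_ff, mem_hsum_tf, mem_hsum_ft]
  cases s <;> simp [add_assoc]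
  rw [key h, ← exists_or]
lemma A_fff (h : SplitCond M) (a b c : M) :
    (⋃ w ∈ hsum (a,false) (b,false), hsum w (c,false))
      = ⋃ w ∈ hsum (b,false) (c,false), hsum (a,false) w := by
  ext ⟨x, s⟩
  simp only [Set.mem_iUnion, exists_prop, Prod.exists, Bool.exists_bool,
    mem_hsum_tt, mem_hsum_ff, mem_hsum_tf, mem_hsum_ft]
  cases s <;> simp [add_assoc]
lemma raw_assoc (h : SplitCond M) (p q r : M × Bool) :
    (⋃ w ∈ hsum p q, hsum w r) = ⋃ w ∈ hsum q r, hsum p w := by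
  obtain ⟨a, _ | _⟩ := p <;> obtain ⟨b, _ | _⟩ := q <;> obtain ⟨c, _ | _⟩ := r
  · exact A_fff h a b c
  · exact A_fft h a b c
  · exact A_ftf h a b c
  · exact A_ftt h a b c
  · exact A_tff h a b c
  · exact A_tft h a b c
  · exact A_ttf h a b c
  · exact A_ttt h a b c

local notation "Q" => Quot.mk (symRel M)

lemma hsum_comm (p q : M × Bool) : hsum p q = hsum q p := by
  obtain ⟨a, _ | _⟩ := p <;> obtain ⟨b, _ | _⟩ := q <;> simp [hsum, add_comm a b]

lemma image_tt (a c : M) : Q '' hsum (a, true) (c, true) = {Q (a + c, true)} := by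
  rw [show hsum (a, true) (c, true) = {(a + c, true)} from rfl, Set.image_singleton]

lemma image_ff (a c : M) : Q '' hsum (a, false) (c, false) = {Q (a + c, false)} := by
  rw [show hsum (a, false) (c, false) = {(a + c, false)} from rfl, Set.image_singleton]

lemma image_ft_t {a b : M} (hab : a + b = 0) (c : M) :
    Q '' hsum (b, false) (c, true) = {Q (a + c, true)} := by
  ext x
  simp only [Set.mem_image, Set.mem_singleton_iff]
  constructor
  · rintro ⟨⟨z, sz⟩, hz, rfl⟩
    rcases mem_hsum_ft.mp hz with ⟨rfl, he⟩ | ⟨rfl, he⟩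
    · have hza : z = a + c := by
        calc z = z + (a + b) := by rw [hab, add_zero]
        _ = a + (z + b) := by abel
        _ = a + c := by rw [he]
      rw [hza]
    · refine Quot.sound ⟨by simp, ?_⟩
      calc z + (a + c) = (z + c) + a := by abel
      _ = 0 := by rw [he, add_comm, hab]
  · rintro rfl
    refine ⟨(a + c, true), mem_hsum_ft.mpr (Or.inl ⟨rfl, ?_⟩), rfl⟩
    calc a + c + b = (a + b) + c := by abel
    _ = c := by rw [hab, zero_add]

lemma image_tf_f {a b : M} (hab : a + b = 0) (c : M) :
    Q '' hsum (a, true) (c, false) = {Q (b + c, false)} := by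
  ext x
  simp only [Set.mem_image, Set.mem_singleton_iff]
  constructor
  · rintro ⟨⟨z, sz⟩, hz, rfl⟩
    rcases mem_hsum_tf.mp hz with ⟨rfl, he⟩ | ⟨rfl, he⟩
    · refine Quot.sound ⟨by simp, ?_⟩
      calc z + (b + c) = (z + c) + b := by abel
      _ = 0 := by rw [he, hab]
    · have hzb : z = b + c := by
        calc z = z + (a + b) := by rw [hab, add_zero]
        _ = b + (z + a) := by abel
        _ = b + c := by rw [he]
      rw [hzb]
  · rintro rfl
    refine ⟨(b + c, false), mem_hsum_tf.mpr (Or.inr ⟨rfl, ?_⟩), rfl⟩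
    calc b + c + a = (a + b) + c := by abel
    _ = c := by rw [hab, zero_add]

lemma image_congr_left {p p' : M × Bool} (hr : symRel M p p') (t : M × Bool) :
    Q '' hsum p t = Q '' hsum p' t := by
  obtain ⟨a, sa⟩ := p
  obtain ⟨b, sb⟩ := p'
  obtain ⟨hne, he⟩ := hr
  simp only at hne he
  obtain ⟨c, sc⟩ := t
  cases sa <;> cases sb <;> simp at hne <;> cases sc
  · -- p = (a,false), p' = (b,true), t = (c,false)
    rw [image_ff, image_tf_f (by rw [add_comm]; exact he) c]
  · rw [image_ft_t (by rw [add_comm]; exact he) c, image_tt]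
  · rw [image_tf_f he c, image_ff]
  · rw [image_tt, image_ft_t he c]

lemma image_congr {p p' q q' : M × Bool} (hp : Q p = Q p') (hq : Q q = Q q') :
    Q '' hsum p q = Q '' hsum p' q' := by
  have step : ∀ {r r' : M × Bool} (t : M × Bool), Q r = Q r' →
      Q '' hsum r t = Q '' hsum r' t := by
    intro r r' t hrr
    rcases (quot_eq_iff r r').mp hrr with rfl | hrel
    · rfl
    · exact image_congr_left hrel t
  calc Q '' hsum p q = Q '' hsum p' q := step q hp
  _ = Q '' hsum q p' := by rw [hsum_comm]
  _ = Q '' hsum q' p' := step p' hq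
  _ = Q '' hsum p' q' := by rw [hsum_comm]

lemma hadd_eq (p q : M × Bool) : hadd (Q p) (Q q) = Q '' hsum p q := by
  ext x
  constructor
  · rintro ⟨p', q', r, hp', hq', rfl, hr⟩
    rw [image_congr hp'.symm hq'.symm]
    exact ⟨r, hr, rfl⟩
  · rintro ⟨r, hr, rfl⟩
    exact ⟨p, q, r, rfl, rfl, rfl, hr⟩

lemma union_hadd_left (p q t : M × Bool) :
    (⋃ w ∈ hadd (Q p) (Q q), hadd w (Q t)) = Q '' ⋃ r ∈ hsum p q, hsum r t := by
  rw [hadd_eq]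
  ext x
  simp only [Set.mem_iUnion, Set.mem_image, exists_prop]
  constructor
  · rintro ⟨w, ⟨r, hr, rfl⟩, hx⟩
    rw [hadd_eq] at hx
    obtain ⟨y, hy, rfl⟩ := hx
    exact ⟨y, Set.mem_iUnion₂.mpr ⟨r, hr, hy⟩, rfl⟩
  · rintro ⟨y, hy', rfl⟩
    obtain ⟨r, hr, hy⟩ := Set.mem_iUnion₂.mp hy'
    refine ⟨Q r, ⟨r, hr, rfl⟩, ?_⟩
    rw [hadd_eq]
    exact ⟨y, hy, rfl⟩

lemma union_hadd_right (p q t : M × Bool) :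
    (⋃ w ∈ hadd (Q q) (Q t), hadd (Q p) w) = Q '' ⋃ r ∈ hsum q t, hsum p r := by
  rw [hadd_eq]
  ext x
  simp only [Set.mem_iUnion, Set.mem_image, exists_prop]
  constructor
  · rintro ⟨w, ⟨r, hr, rfl⟩, hx⟩
    rw [hadd_eq] at hx
    obtain ⟨y, hy, rfl⟩ := hx
    exact ⟨y, Set.mem_iUnion₂.mpr ⟨r, hr, hy⟩, rfl⟩
  · rintro ⟨y, hy', rfl⟩
    obtain ⟨r, hr, hy⟩ := Set.mem_iUnion₂.mp hy'
    refine ⟨Q r, ⟨r, hr, rfl⟩, ?_⟩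
    rw [hadd_eq]
    exact ⟨y, hy, rfl⟩

end Aux

theorem hadd_assoc {M : Type*} [AddCommMonoid M] (h : SplitCond M) :
    ∀ a b c : SymHG M,
      (⋃ w ∈ hadd a b, hadd w c) = ⋃ w ∈ hadd b c, hadd a w := by
  intro a b c
  induction a using Quot.ind with | _ p => ?_
  induction b using Quot.ind with | _ q => ?_
  induction c using Quot.ind with | _ t => ?_
  rw [union_hadd_left, union_hadd_right, raw_assoc h]
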